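/- Fix an integer s ≥ 2. Let X_1, X_2, … be an i.i.d. sequence of random variables with the Log-Logistic(α;0,1) distribution, α > 0, and for each i ∈ ℕ let Q_{i,s}^{LL} = (1/2)·log(X_{(is, i(s+1)−1)}/X_{(i, i(s+1)−1)})/(H_{is−1} − H_{i−1}) be computed from the first n = i(s+1)−1 observations. Then Q_{i,s}^{LL} converges almost surely to 1/α as i → ∞. -/

import Mathlib

open MeasureTheory ProbabilityTheory Real Filter
open Topology

/-- The `k`-th order statistic (1-based indexing) of the sample `x : Fin n → ℝ`. -/
noncomputable def orderStat (n : ℕ) (x : Fin n → ℝ) (k : ℕ) : ℝ :=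
  (Multiset.sort ((List.ofFn x : List ℝ) : Multiset ℝ) (· ≤ ·)).getD (k - 1) 0

/-- The cumulative distribution function of the Log-Logistic(α; 0, 1) distribution. -/
noncomputable def logLogisticCDF (α : ℝ) (x : ℝ) : ℝ :=
  if 0 < x then 1 / (1 + x ^ (-α)) else 0

lemma orderStat_le_iff {n : ℕ} (x : Fin n → ℝ) {k : ℕ} (hk1 : 1 ≤ k) (hkn : k ≤ n) (t : ℝ) :
    orderStat n x k ≤ t ↔ k ≤ (List.ofFn x).countP (fun a => decide (a ≤ t)) := by
  classical
  set l := Multiset.sort ((List.ofFn x : List ℝ) : Multiset ℝ) (· ≤ ·) with hl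
  have hperm : l.Perm (List.ofFn x) := Multiset.coe_eq_coe.1 (Multiset.sort_eq _ _)
  have hlen : l.length = n := by rw [hperm.length_eq, List.length_ofFn]
  have hsort : l.Pairwise (· ≤ ·) := Multiset.pairwise_sort _ _
  rw [← hperm.countP_eq]
  have hklt : k - 1 < l.length := by omega
  unfold orderStat
  rw [← hl, List.getD_eq_getElem l 0 hklt]
  constructor
  · intro h
    have h1 : (l.take k).filter (fun a => decide (a ≤ t)) = l.take k := by
      rw [List.filter_eq_self]
      intro a ha
      obtain ⟨i, hi, rfl⟩ := List.getElem_of_mem ha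
      have hi' : i < k := lt_of_lt_of_le hi (by simp [List.length_take])
      rw [List.getElem_take]
      simp only [decide_eq_true_eq]
      have : l.get ⟨i, by omega⟩ ≤ l.get ⟨k - 1, hklt⟩ :=
        hsort.rel_get_of_le (by simp; omega)
      simpa using this.trans h
    have h2 : ((l.take k).filter (fun a => decide (a ≤ t))).length ≤
        (l.filter (fun a => decide (a ≤ t))).length :=
      ((l.take_sublist k).filter _).length_le
    rw [h1] at h2
    rw [List.countP_eq_length_filter]
    calc k = (l.take k).length := by simp [List.length_take]; omega
    _ ≤ _ := h2
  · intro h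
    by_contra hc
    push_neg at hc
    have hdrop : (l.drop (k-1)).countP (fun a => decide (a ≤ t)) = 0 := by
      rw [List.countP_eq_zero]
      intro a ha
      obtain ⟨j, hj, rfl⟩ := List.getElem_of_mem ha
      have hj' : k - 1 + j < l.length := by rw [List.length_drop] at hj; omega
      rw [List.getElem_drop]
      simp only [decide_eq_true_eq, not_le]
      refine lt_of_lt_of_le hc ?_
      have : l.get ⟨k - 1, hklt⟩ ≤ l.get ⟨k - 1 + j, hj'⟩ :=
        hsort.rel_get_of_le (by simp)
      simpa using this
    have := l.take_append_drop (k-1)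
    have hsum : l.countP (fun a => decide (a ≤ t)) =
        (l.take (k-1)).countP (fun a => decide (a ≤ t)) +
        (l.drop (k-1)).countP (fun a => decide (a ≤ t)) := by
      conv_lhs => rw [← this]
      exact List.countP_append
    have htk : (l.take (k-1)).countP (fun a => decide (a ≤ t)) ≤ k - 1 :=
      le_trans List.countP_le_length (by simp [List.length_take])
    omega


lemma countP_ofFn (g : ℕ → ℝ) (t : ℝ) : ∀ n : ℕ,
    (((List.ofFn (fun j : Fin n => g j)).countP (fun a => decide (a ≤ t)) : ℕ) : ℝ) =
      ∑ j ∈ Finset.range n, (if g j ≤ t then (1:ℝ) else 0)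
  | 0 => by simp
  | (n+1) => by
      rw [List.ofFn_succ', Finset.sum_range_succ, ← countP_ofFn g t n]
      rw [List.concat_eq_append, List.countP_append]
      simp only [List.countP_singleton, Fin.val_last, Fin.coe_castSucc]
      push_cast
      split_ifs with h h2 h3 <;> simp_all



lemma logLogisticCDF_nonneg (α x : ℝ) : 0 ≤ logLogisticCDF α x := by
  unfold logLogisticCDF
  split_ifs with h
  · positivity
  · exact le_refl 0

lemma empCDF_tendsto {Ω : Type*} [MeasurableSpace Ω] (μ : Measure Ω) [IsProbabilityMeasure μ]
    (α : ℝ) (X : ℕ → Ω → ℝ) (hmeas : ∀ k, Measurable (X k))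
    (hindep : iIndepFun X μ)
    (hdist : ∀ k x, μ {ω | X k ω ≤ x} = ENNReal.ofReal (logLogisticCDF α x)) (t : ℝ) :
    ∀ᵐ ω ∂μ, Tendsto (fun n : ℕ => (∑ j ∈ Finset.range n, (if X j ω ≤ t then (1:ℝ) else 0)) / n)
      atTop (𝓝 (logLogisticCDF α t)) := by
  classical
  set f : ℝ → ℝ := (Set.Iic t).indicator (fun _ => 1) with hf
  have fmeas : Measurable f := measurable_const.indicator measurableSet_Iic
  set Y : ℕ → Ω → ℝ := fun k ω => f (X k ω) with hY
  have hYite : ∀ k ω, Y k ω = if X k ω ≤ t then (1:ℝ) else 0 := by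
    intro k ω
    simp [hY, hf, Set.indicator_apply, Set.mem_Iic]
  have identX : ∀ k, IdentDistrib (X k) (X 0) μ μ := by
    intro k
    refine ⟨(hmeas k).aemeasurable, (hmeas 0).aemeasurable, ?_⟩
    refine Measure.ext_of_Iic (μ.map (X k)) (μ.map (X 0)) (fun a => ?_)
    rw [Measure.map_apply (hmeas k) measurableSet_Iic,
      Measure.map_apply (hmeas 0) measurableSet_Iic]
    have h1 : X k ⁻¹' Set.Iic a = {ω | X k ω ≤ a} := rfl
    have h2 : X 0 ⁻¹' Set.Iic a = {ω | X 0 ω ≤ a} := rfl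
    rw [h1, h2, hdist, hdist]
  have hident : ∀ k, IdentDistrib (Y k) (Y 0) μ μ := fun k => (identX k).comp fmeas
  have hpind : Pairwise (Function.onFun (IndepFun · · μ) Y) := fun i j hij =>
    (hindep.indepFun hij).comp fmeas fmeas
  have hAmeas : MeasurableSet ((X 0) ⁻¹' Set.Iic t) := (hmeas 0) measurableSet_Iic
  have hYind : Y 0 = ((X 0) ⁻¹' Set.Iic t).indicator (fun _ => (1:ℝ)) := by
    funext ω
    simp [hY, hf, Set.indicator_apply, Set.mem_Iic]
  have hint : Integrable (Y 0) μ := by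
    rw [hYind]
    exact (integrable_const (1:ℝ)).indicator hAmeas
  have hexp : μ[Y 0] = logLogisticCDF α t := by
    rw [hYind, integral_indicator_const _ hAmeas]
    have : (X 0) ⁻¹' Set.Iic t = {ω | X 0 ω ≤ t} := rfl
    rw [this, measureReal_def, hdist, smul_eq_mul, mul_one, ENNReal.toReal_ofReal (logLogisticCDF_nonneg α t)]
  have := strong_law_ae_real Y hint hpind hident
  rw [hexp] at this
  filter_upwards [this] with ω hω
  refine hω.congr (fun n => ?_)
  simp only [hYite]



lemma logLogisticCDF_lt {α : ℝ} (hα : 0 < α) {x y : ℝ} (hx : 0 < x) (hxy : x < y) :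
    logLogisticCDF α x < logLogisticCDF α y := by
  have hy : 0 < y := hx.trans hxy
  unfold logLogisticCDF
  rw [if_pos hx, if_pos hy]
  have h1 : y ^ (-α) < x ^ (-α) := by
    rw [Real.rpow_neg hx.le, Real.rpow_neg hy.le]
    exact inv_strictAnti₀ (Real.rpow_pos_of_pos hx α) (Real.rpow_lt_rpow hx.le hxy hα)
  have h2 : 0 < 1 + y ^ (-α) := by
    have := Real.rpow_pos_of_pos hy (-α); linarith
  exact one_div_lt_one_div_of_lt h2 (by linarith)

lemma logLogisticCDF_rpow {α : ℝ} (hα : 0 < α) {c : ℝ} (hc : 0 < c) :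
    logLogisticCDF α (c ^ (1/α)) = c / (c + 1) := by
  have hpos : 0 < c ^ (1/α) := Real.rpow_pos_of_pos hc _
  unfold logLogisticCDF
  rw [if_pos hpos, ← Real.rpow_mul hc.le]
  have : 1/α * (-α) = -1 := by field_simp
  rw [this, Real.rpow_neg_one]
  rw [div_eq_div_iff (by positivity) (by positivity)]
  field_simp


lemma orderStat_tendsto {α : ℝ} (hα : 0 < α) (g : ℕ → ℝ)
    (n k : ℕ → ℕ) (p q : ℝ) (hq : 0 < q) (hFq : logLogisticCDF α q = p)
    (hcnt : ∀ t : ℚ, Tendsto (fun i => (((List.ofFn (fun j : Fin (n i) => g j)).countP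
        (fun a => decide (a ≤ (t:ℝ))) : ℕ) : ℝ) / (n i)) atTop (𝓝 (logLogisticCDF α t)))
    (hkn : Tendsto (fun i => (k i : ℝ) / (n i)) atTop (𝓝 p))
    (hk1 : ∀ᶠ i in atTop, 1 ≤ k i) (hkle : ∀ᶠ i in atTop, k i ≤ n i) :
    Tendsto (fun i => orderStat (n i) (fun j => g j) (k i)) atTop (𝓝 q) := by
  rw [tendsto_order]
  constructor
  · intro b hb
    obtain ⟨y, hy1, hy2⟩ := exists_rat_btwn (show max b 0 < q from max_lt hb hq)
    have hy0 : 0 < (y : ℝ) := lt_of_le_of_lt (le_max_right b 0) hy1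
    have hFy : logLogisticCDF α y < p := hFq ▸ logLogisticCDF_lt hα hy0 hy2
    set m := (logLogisticCDF α y + p) / 2 with hm
    have hm1 : logLogisticCDF α y < m := by rw [hm]; linarith
    have hm2 : m < p := by rw [hm]; linarith
    have E1 := (tendsto_order.1 (hcnt y)).2 m hm1
    have E2 := (tendsto_order.1 hkn).1 m hm2
    filter_upwards [E1, E2, hk1, hkle] with i h1 h2 hk1i hklei
    have hn : 0 < n i := lt_of_lt_of_le hk1i hklei
    have hn' : (0 : ℝ) < (n i : ℝ) := by exact_mod_cast hn
    have hlt : (((List.ofFn (fun j : Fin (n i) => g j)).countP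
        (fun a => decide (a ≤ (y:ℝ))) : ℕ) : ℝ) < (k i : ℝ) :=
      (div_lt_div_iff_of_pos_right hn').1 (h1.trans h2)
    have hltn : ((List.ofFn (fun j : Fin (n i) => g j)).countP
        (fun a => decide (a ≤ (y:ℝ)))) < k i := by exact_mod_cast hlt
    have hns : ¬ orderStat (n i) (fun j => g j) (k i) ≤ (y : ℝ) := by
      intro hle
      exact absurd ((orderStat_le_iff _ hk1i hklei (y:ℝ)).1 hle) (by omega)
    have := not_le.1 hns
    exact lt_trans (lt_of_le_of_lt (le_max_left b 0) hy1) this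
  · intro b hb
    obtain ⟨y, hy1, hy2⟩ := exists_rat_btwn hb
    have hFy : p < logLogisticCDF α y := hFq ▸ logLogisticCDF_lt hα hq hy1
    set m := (p + logLogisticCDF α y) / 2 with hm
    have hm1 : m < logLogisticCDF α y := by rw [hm]; linarith
    have hm2 : p < m := by rw [hm]; linarith
    have E1 := (tendsto_order.1 (hcnt y)).1 m hm1
    have E2 := (tendsto_order.1 hkn).2 m hm2
    filter_upwards [E1, E2, hk1, hkle] with i h1 h2 hk1i hklei
    have hn : 0 < n i := lt_of_lt_of_le hk1i hklei
    have hn' : (0 : ℝ) < (n i : ℝ) := by exact_mod_cast hn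
    have hlt : (k i : ℝ) < (((List.ofFn (fun j : Fin (n i) => g j)).countP
        (fun a => decide (a ≤ (y:ℝ))) : ℕ) : ℝ) :=
      (div_lt_div_iff_of_pos_right hn').1 (h2.trans h1)
    have hltn : k i ≤ ((List.ofFn (fun j : Fin (n i) => g j)).countP
        (fun a => decide (a ≤ (y:ℝ)))) := by
      have h3 : k i < (List.ofFn (fun j : Fin (n i) => g j)).countP
          (fun a => decide (a ≤ (y:ℝ))) := by exact_mod_cast hlt
      omega
    have := (orderStat_le_iff _ hk1i hklei (y:ℝ)).2 hltn
    exact lt_of_le_of_lt this hy2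


lemma aux_ratio (a b c d : ℝ) (hb : 0 < b) :
    Tendsto (fun x : ℝ => (a*x+c)/(b*x+d)) atTop (𝓝 (a/b)) := by
  have h0 : Tendsto (fun x : ℝ => x⁻¹) atTop (𝓝 (0:ℝ)) := tendsto_inv_atTop_zero
  have h1 : Tendsto (fun x : ℝ => a + c * x⁻¹) atTop (𝓝 (a + c * 0)) :=
    tendsto_const_nhds.add (h0.const_mul c)
  have h2 : Tendsto (fun x : ℝ => b + d * x⁻¹) atTop (𝓝 (b + d * 0)) :=
    tendsto_const_nhds.add (h0.const_mul d)
  rw [mul_zero, add_zero] at h1 h2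
  apply ((h1.div h2 hb.ne').congr' ?_)
  filter_upwards [eventually_gt_atTop 0] with x hx
  have e1 : a + c * x⁻¹ = (a*x+c)/x := by field_simp
  have e2 : b + d * x⁻¹ = (b*x+d)/x := by field_simp
  simp only [Pi.div_apply]
  rw [e1, e2, div_div_div_cancel_right₀ hx.ne']

lemma nat_tendsto_mul_sub (s : ℕ) (hs : 1 ≤ s) :
    Tendsto (fun i : ℕ => i * s - 1) atTop atTop := by
  rw [tendsto_atTop_atTop]
  intro b
  refine ⟨b + 1, fun i hi => ?_⟩
  have : i * 1 ≤ i * s := Nat.mul_le_mul_left i hs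
  omega

lemma cast_ratio (s : ℕ) (hs : 2 ≤ s) (a : ℕ → ℕ) (A : ℝ)
    (hcast : ∀ i : ℕ, 2 ≤ i → ((a i : ℝ)) = A * i + 0) :
    Tendsto (fun i : ℕ => (a i : ℝ) / ((i * (s+1) - 1 : ℕ) : ℝ)) atTop (𝓝 (A / ((s:ℝ)+1))) := by
  have hb : (0:ℝ) < (s:ℝ) + 1 := by positivity
  have := (aux_ratio A ((s:ℝ)+1) 0 (-1) hb).comp (tendsto_natCast_atTop_atTop (R := ℝ))
  apply this.congr'
  filter_upwards [eventually_ge_atTop 2] with i hi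
  have h1 : 1 ≤ i * (s+1) := by nlinarith
  have e1 : (((i * (s+1) - 1 : ℕ)) : ℝ) = ((s:ℝ)+1) * i + (-1) := by
    push_cast [Nat.cast_sub h1]
    ring
  rw [Function.comp_apply, hcast i hi, e1]

lemma harm_lim (s : ℕ) (hs : 2 ≤ s) :
    Tendsto (fun i : ℕ => ((harmonic (i*s-1) : ℝ) - (harmonic (i-1) : ℝ))) atTop
      (𝓝 (Real.log s)) := by
  have t1 : Tendsto (fun i : ℕ => i * s - 1) atTop atTop := nat_tendsto_mul_sub s (by omega)
  have t2 : Tendsto (fun i : ℕ => i - 1) atTop atTop := by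
    have := nat_tendsto_mul_sub 1 le_rfl
    simpa using this
  have hA := Real.tendsto_harmonic_sub_log.comp t1
  have hB := Real.tendsto_harmonic_sub_log.comp t2
  have hs0 : (0:ℝ) < (s:ℝ) := by positivity
  have ratio_t : Tendsto (fun i : ℕ => (((i*s-1 : ℕ)):ℝ) / (((i-1 : ℕ)):ℝ)) atTop
      (𝓝 (s:ℝ)) := by
    have := (aux_ratio (s:ℝ) 1 (-1) (-1) one_pos).comp (tendsto_natCast_atTop_atTop (R := ℝ))
    rw [div_one] at this
    apply this.congr'
    filter_upwards [eventually_ge_atTop 2] with i hi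
    have h1 : 1 ≤ i * s := by nlinarith
    have e1 : (((i*s-1 : ℕ)):ℝ) = (s:ℝ) * i + (-1) := by push_cast [Nat.cast_sub h1]; ring
    have e2 : (((i-1 : ℕ)):ℝ) = 1 * i + (-1) := by push_cast [Nat.cast_sub (by omega : 1 ≤ i)]; ring
    rw [Function.comp_apply, e1, e2]
  have hC : Tendsto (fun i : ℕ => Real.log (((i*s-1:ℕ)):ℝ) - Real.log (((i-1:ℕ)):ℝ)) atTop
      (𝓝 (Real.log s)) := by
    have hlog := ((Real.continuousAt_log hs0.ne').tendsto).comp ratio_t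
    apply hlog.congr'
    filter_upwards [eventually_ge_atTop 2] with i hi
    have h1 : 1 ≤ i * s := by nlinarith
    have hn1 : (0:ℝ) < (((i*s-1:ℕ)):ℝ) := by
      have : 2 ≤ i * s := by nlinarith
      have : 1 ≤ i * s - 1 := by omega
      exact_mod_cast Nat.lt_of_lt_of_le Nat.zero_lt_one this
    have hn2 : (0:ℝ) < (((i-1:ℕ)):ℝ) := by
      have : 1 ≤ i - 1 := by omega
      exact_mod_cast Nat.lt_of_lt_of_le Nat.zero_lt_one this
    rw [Function.comp_apply, Real.log_div hn1.ne' hn2.ne']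
  have := (hA.sub hB).add hC
  rw [show Real.eulerMascheroniConstant - Real.eulerMascheroniConstant + Real.log s
      = Real.log s by ring] at this
  apply this.congr
  intro i
  simp only [Function.comp_apply]
  ring


/-- For fixed `s ≥ 2` and an i.i.d. sequence from the
Log-Logistic(α;0,1) distribution, the estimators
`Q_{i,s}^{LL} = (1/2) log(X_{(is,n)}/X_{(i,n)}) / (H_{is-1} - H_{i-1})`,
computed from the first `n = i(s+1)-1` observations, converge almost surely
to `1/α` as `i → ∞`. -/
theorem stmt1 {Ω : Type*} [MeasurableSpace Ω] (μ : Measure Ω) [IsProbabilityMeasure μ]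
    (s : ℕ) (hs : 2 ≤ s) (α : ℝ) (hα : 0 < α)
    (X : ℕ → Ω → ℝ) (hmeas : ∀ k, Measurable (X k))
    (hindep : iIndepFun X μ)
    (hdist : ∀ k x, μ {ω | X k ω ≤ x} = ENNReal.ofReal (logLogisticCDF α x)) :
    ∀ᵐ ω ∂μ, Tendsto (fun i : ℕ =>
        (1 / 2) * Real.log
          (orderStat (i * (s + 1) - 1) (fun j => X j ω) (i * s) /
            orderStat (i * (s + 1) - 1) (fun j => X j ω) i) /
          ((harmonic (i * s - 1) : ℝ) - (harmonic (i - 1) : ℝ)))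
      atTop (nhds (1 / α)) := by
  classical
  have key : ∀ᵐ ω ∂μ, ∀ t : ℚ, Tendsto (fun n : ℕ =>
      (((List.ofFn (fun j : Fin n => X (j : ℕ) ω)).countP
        (fun a => decide (a ≤ (t:ℝ))) : ℕ) : ℝ) / n)
      atTop (𝓝 (logLogisticCDF α t)) := by
    rw [ae_all_iff]
    intro t
    filter_upwards [empCDF_tendsto μ α X hmeas hindep hdist (t:ℝ)] with ω hω
    apply hω.congr
    intro n
    rw [countP_ofFn (fun j => X j ω) (t:ℝ) n]
  filter_upwards [key] with ω hω
  have hniT : Tendsto (fun i : ℕ => i * (s+1) - 1) atTop atTop :=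
    nat_tendsto_mul_sub (s+1) (by omega)
  have hcnt : ∀ t : ℚ, Tendsto (fun i : ℕ =>
      (((List.ofFn (fun j : Fin (i * (s+1) - 1) => X (j : ℕ) ω)).countP
        (fun a => decide (a ≤ (t:ℝ))) : ℕ) : ℝ) / (i * (s+1) - 1 : ℕ)) atTop
      (𝓝 (logLogisticCDF α t)) := fun t => (hω t).comp hniT
  have hs0 : (0:ℝ) < (s:ℝ) := by exact_mod_cast (by omega : 0 < s)
  have hq1 : (0:ℝ) < ((s:ℝ)) ^ ((1:ℝ)/α) := Real.rpow_pos_of_pos hs0 _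
  have hq2pos : (0:ℝ) < ((s:ℝ)⁻¹) ^ ((1:ℝ)/α) := Real.rpow_pos_of_pos (by positivity) _
  have hF1 : logLogisticCDF α ((s:ℝ) ^ ((1:ℝ)/α)) = (s:ℝ)/((s:ℝ)+1) :=
    logLogisticCDF_rpow hα hs0
  have hF2 : logLogisticCDF α (((s:ℝ)⁻¹) ^ ((1:ℝ)/α)) = 1/((s:ℝ)+1) := by
    rw [logLogisticCDF_rpow hα (by positivity : (0:ℝ) < (s:ℝ)⁻¹)]
    rw [div_eq_div_iff (by positivity) (by positivity)]
    field_simp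
    ring
  have hk1T : Tendsto (fun i : ℕ => ((i*s : ℕ):ℝ)/((i * (s+1) - 1 : ℕ):ℝ)) atTop
      (𝓝 ((s:ℝ)/((s:ℝ)+1))) :=
    cast_ratio s hs (fun i => i*s) (s:ℝ) (fun i _ => by push_cast; ring)
  have hk2T : Tendsto (fun i : ℕ => ((i : ℕ):ℝ)/((i * (s+1) - 1 : ℕ):ℝ)) atTop
      (𝓝 ((1:ℝ)/((s:ℝ)+1))) :=
    cast_ratio s hs (fun i => i) 1 (fun i _ => by push_cast; ring)
  have ev1 : ∀ᶠ i in atTop, 1 ≤ i * s := by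
    filter_upwards [eventually_ge_atTop 1] with i hi
    have : 1 * 1 ≤ i * s := Nat.mul_le_mul hi (by omega)
    omega
  have ev1' : ∀ᶠ i in atTop, i * s ≤ i * (s+1) - 1 := by
    filter_upwards [eventually_ge_atTop 1] with i hi
    have h1 : i * (s+1) = i * s + i := by ring
    omega
  have ev2 : ∀ᶠ i in atTop, 1 ≤ i := eventually_ge_atTop 1
  have ev2' : ∀ᶠ i in atTop, i ≤ i * (s+1) - 1 := by
    filter_upwards [eventually_ge_atTop 1] with i hi
    have h1 : i * (s+1) = i * s + i := by ring
    have h2 : i * 1 ≤ i * s := Nat.mul_le_mul_left i (by omega)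
    omega
  have T1 := orderStat_tendsto hα (fun j => X j ω) (fun i => i * (s+1) - 1)
    (fun i => i * s) ((s:ℝ)/((s:ℝ)+1)) ((s:ℝ) ^ ((1:ℝ)/α)) hq1 hF1 hcnt hk1T ev1 ev1'
  have T2 := orderStat_tendsto hα (fun j => X j ω) (fun i => i * (s+1) - 1)
    (fun i => i) ((1:ℝ)/((s:ℝ)+1)) (((s:ℝ)⁻¹) ^ ((1:ℝ)/α)) hq2pos hF2 hcnt hk2T ev2 ev2'
  have Tdiv := T1.div T2 hq2pos.ne'
  have hqq : (0:ℝ) < ((s:ℝ) ^ ((1:ℝ)/α)) / (((s:ℝ)⁻¹) ^ ((1:ℝ)/α)) := div_pos hq1 hq2pos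
  have Tlog := ((Real.continuousAt_log hqq.ne').tendsto).comp Tdiv
  have Tmul := Tlog.const_mul ((1:ℝ)/2)
  have hlogs : Real.log s ≠ 0 :=
    ne_of_gt (Real.log_pos (by exact_mod_cast (by omega : 1 < s)))
  have Tfinal := Tmul.div (harm_lim s hs) hlogs
  have hval : (1/2 : ℝ) * Real.log (((s:ℝ) ^ ((1:ℝ)/α)) / (((s:ℝ)⁻¹) ^ ((1:ℝ)/α))) /
      Real.log s = 1/α := by
    rw [Real.log_div hq1.ne' hq2pos.ne', Real.log_rpow hs0,
      Real.log_rpow (by positivity : (0:ℝ) < (s:ℝ)⁻¹), Real.log_inv]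
    field_simp
    ring
  rw [hval] at Tfinal
  exact Tfinal.congr (fun i => by simp only [Function.comp_apply, Pi.div_apply])
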